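/- Let Λ be a lattice in ℝ² with ℤ-basis (λ₁, λ₂). Let D ⊆ [0,1] × [0,1] be the set D = ((0,1) × (0,1)) ∪ ([0,1/2] × {0}) ∪ ([0,1/2] × {1}) ∪ ({0} × [0,1]), and let T = {2sλ₁ + tλ₂ : (s,t) ∈ D} (the union of the interior of the fundamental parallelogram with corners 0, 2λ₁, λ₂, 2λ₁ + λ₂ and the 'left half' of its boundary). Then T contains exactly one point of each Γ_Λ-orbit; that is, π_Λ restricted to T is a bijection onto ℝ²/Γ_Λ. -/

import Mathlib

open Set

/-- The plane ℝ². -/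
abbrev V2 : Type := EuclideanSpace ℝ (Fin 2)

/-- The `Γ_Λ`-orbit of `x`: the set `{2λ + x : λ ∈ Λ} ∪ {2λ − x : λ ∈ Λ}`. -/
def orbitG (Λ : AddSubgroup V2) (x : V2) : Set V2 :=
  {y : V2 | ∃ l ∈ Λ, y = (2:ℝ) • l + x ∨ y = (2:ℝ) • l - x}

/-- The parameter set
`D = ((0,1) × (0,1)) ∪ ([0,1/2] × {0}) ∪ ([0,1/2] × {1}) ∪ ({0} × [0,1]) ⊆ [0,1] × [0,1]`. -/
def Dset : Set (ℝ × ℝ) :=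
  (Ioo (0:ℝ) 1 ×ˢ Ioo (0:ℝ) 1) ∪ (Icc (0:ℝ) (1/2) ×ˢ {(0:ℝ)}) ∪
    (Icc (0:ℝ) (1/2) ×ˢ {(1:ℝ)}) ∪ ({(0:ℝ)} ×ˢ Icc (0:ℝ) 1)

/-- The coordinate relation induced by `Γ_Λ`-equivalence. -/
def RelD (p q : ℝ × ℝ) : Prop :=
  ∃ a b : ℤ, (p.1 = q.1 + a ∧ p.2 = q.2 + 2*b) ∨ (p.1 = -q.1 + a ∧ p.2 = -q.2 + 2*b)

lemma mem_D_interior {s t : ℝ} (h1 : 0 < s) (h2 : s < 1) (h3 : 0 < t) (h4 : t < 1) :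
    (s, t) ∈ Dset :=
  Or.inl (Or.inl (Or.inl ⟨⟨h1, h2⟩, h3, h4⟩))

lemma mem_D_bot {s : ℝ} (h1 : 0 ≤ s) (h2 : s ≤ 1/2) : ((s, (0:ℝ)) : ℝ × ℝ) ∈ Dset :=
  Or.inl (Or.inl (Or.inr ⟨⟨h1, h2⟩, rfl⟩))

lemma mem_D_top {s : ℝ} (h1 : 0 ≤ s) (h2 : s ≤ 1/2) : ((s, (1:ℝ)) : ℝ × ℝ) ∈ Dset :=
  Or.inl (Or.inr ⟨⟨h1, h2⟩, rfl⟩)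

lemma mem_D_left {t : ℝ} (h1 : 0 ≤ t) (h2 : t ≤ 1) : (((0:ℝ), t) : ℝ × ℝ) ∈ Dset :=
  Or.inr ⟨rfl, h1, h2⟩

lemma D_bounds {s t : ℝ} (hp : ((s, t) : ℝ × ℝ) ∈ Dset) :
    0 ≤ s ∧ s < 1 ∧ 0 ≤ t ∧ t ≤ 1 := by
  simp only [Dset, mem_union, mem_prod, mem_Ioo, mem_Icc, mem_singleton_iff] at hp
  rcases hp with ((⟨⟨h1, h2⟩, h3, h4⟩ | ⟨⟨h1, h2⟩, h3⟩) | ⟨⟨h1, h2⟩, h3⟩) | ⟨h1, h2, h3⟩ <;>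
    exact ⟨by linarith, by linarith, by linarith, by linarith⟩

lemma D_half {s t : ℝ} (hp : ((s, t) : ℝ × ℝ) ∈ Dset) (ht : t = 0 ∨ t = 1) : s ≤ 1/2 := by
  simp only [Dset, mem_union, mem_prod, mem_Ioo, mem_Icc, mem_singleton_iff] at hp
  rcases hp with ((⟨⟨h1, h2⟩, h3, h4⟩ | ⟨⟨h1, h2⟩, h3⟩) | ⟨⟨h1, h2⟩, h3⟩) | ⟨h1, h2, h3⟩ <;>
    rcases ht with ht | ht <;> linarith

lemma relD_exists (u v : ℝ) : ∃ p ∈ Dset, RelD p (u, v) := by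
  have hk1 : ((⌊v/2⌋ : ℤ) : ℝ) ≤ v/2 := Int.floor_le _
  have hk2 : v/2 < (⌊v/2⌋ : ℤ) + 1 := Int.lt_floor_add_one _
  have hu1 : ((⌊u⌋ : ℤ) : ℝ) ≤ u := Int.floor_le _
  have hu2 : u < (⌊u⌋ : ℤ) + 1 := Int.lt_floor_add_one _
  rcases lt_trichotomy (v - 2*(⌊v/2⌋ : ℤ)) 1 with h1 | h1 | h1
  · rcases eq_or_lt_of_le (show (0:ℝ) ≤ v - 2*(⌊v/2⌋ : ℤ) by linarith) with h0 | h0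
    · rcases le_or_gt (u - (⌊u⌋ : ℤ)) (1/2) with hhalf | hhalf
      · exact ⟨(u - (⌊u⌋ : ℤ), 0), mem_D_bot (by linarith) hhalf,
          ⟨-⌊u⌋, -⌊v/2⌋, Or.inl ⟨by push_cast; ring, by push_cast; linarith⟩⟩⟩
      · exact ⟨(1 - (u - (⌊u⌋ : ℤ)), 0), mem_D_bot (by linarith) (by linarith),
          ⟨⌊u⌋ + 1, ⌊v/2⌋, Or.inr ⟨by push_cast; ring, by push_cast; linarith⟩⟩⟩
    · rcases eq_or_lt_of_le (show (0:ℝ) ≤ u - (⌊u⌋ : ℤ) by linarith) with hs0 | hs0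
      · refine ⟨(u - (⌊u⌋ : ℤ), v - 2*(⌊v/2⌋ : ℤ)), ?_,
          ⟨-⌊u⌋, -⌊v/2⌋, Or.inl ⟨by push_cast; ring, by push_cast; ring⟩⟩⟩
        rw [← hs0]
        exact mem_D_left (le_of_lt h0) (le_of_lt h1)
      · exact ⟨(u - (⌊u⌋ : ℤ), v - 2*(⌊v/2⌋ : ℤ)),
          mem_D_interior hs0 (by linarith) h0 h1,
          ⟨-⌊u⌋, -⌊v/2⌋, Or.inl ⟨by push_cast; ring, by push_cast; ring⟩⟩⟩
  · rcases le_or_gt (u - (⌊u⌋ : ℤ)) (1/2) with hhalf | hhalf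
    · exact ⟨(u - (⌊u⌋ : ℤ), 1), mem_D_top (by linarith) hhalf,
        ⟨-⌊u⌋, -⌊v/2⌋, Or.inl ⟨by push_cast; ring, by push_cast; linarith⟩⟩⟩
    · exact ⟨(1 - (u - (⌊u⌋ : ℤ)), 1), mem_D_top (by linarith) (by linarith),
        ⟨⌊u⌋ + 1, ⌊v/2⌋ + 1, Or.inr ⟨by push_cast; ring, by push_cast; linarith⟩⟩⟩
  · have hm1 : ((⌊-u⌋ : ℤ) : ℝ) ≤ -u := Int.floor_le _
    have hm2 : -u < (⌊-u⌋ : ℤ) + 1 := Int.lt_floor_add_one _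
    rcases eq_or_lt_of_le (show (0:ℝ) ≤ -u - (⌊-u⌋ : ℤ) by linarith) with hs0 | hs0
    · refine ⟨(-u - (⌊-u⌋ : ℤ), 2 - (v - 2*(⌊v/2⌋ : ℤ))), ?_,
        ⟨-⌊-u⌋, ⌊v/2⌋ + 1, Or.inr ⟨by push_cast; ring, by push_cast; ring⟩⟩⟩
      rw [← hs0]
      exact mem_D_left (by linarith) (by linarith)
    · exact ⟨(-u - (⌊-u⌋ : ℤ), 2 - (v - 2*(⌊v/2⌋ : ℤ))),
        mem_D_interior hs0 (by linarith) (by linarith) (by linarith),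
        ⟨-⌊-u⌋, ⌊v/2⌋ + 1, Or.inr ⟨by push_cast; ring, by push_cast; ring⟩⟩⟩

lemma relD_trans {p p' q : ℝ × ℝ} (h : RelD p q) (h' : RelD p' q) : RelD p' p := by
  obtain ⟨a, b, hh⟩ := h
  obtain ⟨a', b', hh'⟩ := h'
  rcases hh with ⟨h1, h2⟩ | ⟨h1, h2⟩ <;> rcases hh' with ⟨h1', h2'⟩ | ⟨h1', h2'⟩
  · exact ⟨a' - a, b' - b, Or.inl ⟨by push_cast; linarith, by push_cast; linarith⟩⟩
  · exact ⟨a' + a, b' + b, Or.inr ⟨by push_cast; linarith, by push_cast; linarith⟩⟩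
  · exact ⟨a' + a, b' + b, Or.inr ⟨by push_cast; linarith, by push_cast; linarith⟩⟩
  · exact ⟨a' - a, b' - b, Or.inl ⟨by push_cast; linarith, by push_cast; linarith⟩⟩

lemma relD_unique {p q : ℝ × ℝ} (hp : p ∈ Dset) (hq : q ∈ Dset) (h : RelD p q) : p = q := by
  obtain ⟨s, t⟩ := p
  obtain ⟨u, v⟩ := q
  obtain ⟨hs0, hs1, ht0, ht1⟩ := D_bounds hp
  obtain ⟨hu0, hu1, hv0, hv1⟩ := D_bounds hq
  obtain ⟨a, b, ⟨e1, e2⟩ | ⟨e1, e2⟩⟩ := h <;> dsimp only at e1 e2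
  · have ha : a = 0 := by
      have c1 : (-1 : ℝ) < a := by linarith
      have c2 : (a : ℝ) < 1 := by linarith
      have c1' : (-1 : ℤ) < a := by exact_mod_cast c1
      have c2' : a < 1 := by exact_mod_cast c2
      omega
    have hb : b = 0 := by
      have c1 : (-1 : ℝ) < b := by linarith
      have c2 : (b : ℝ) < 1 := by linarith
      have c1' : (-1 : ℤ) < b := by exact_mod_cast c1
      have c2' : b < 1 := by exact_mod_cast c2
      omega
    subst ha hb
    push_cast at e1 e2
    simp only [Prod.mk.injEq]
    exact ⟨by linarith, by linarith⟩
  · have ha : a = 0 ∨ a = 1 := by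
      have c1 : (0 : ℝ) ≤ a := by linarith
      have c2 : (a : ℝ) < 2 := by linarith
      have c1' : (0 : ℤ) ≤ a := by exact_mod_cast c1
      have c2' : a < 2 := by exact_mod_cast c2
      omega
    have hb : b = 0 ∨ b = 1 := by
      have c1 : (0 : ℝ) ≤ 2*(b:ℝ) := by linarith
      have c2 : 2*(b : ℝ) ≤ 2 := by linarith
      have c1' : (0 : ℤ) ≤ b := by exact_mod_cast (by linarith : (0:ℝ) ≤ (b:ℝ))
      have c2' : b ≤ 1 := by exact_mod_cast (by linarith : (b:ℝ) ≤ 1)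
      omega
    have htv : t = v ∧ (t = 0 ∨ t = 1) := by
      rcases hb with rfl | rfl <;> push_cast at e2
      · exact ⟨by linarith, Or.inl (by linarith)⟩
      · exact ⟨by linarith, Or.inr (by linarith)⟩
    have hsh : s ≤ 1/2 := D_half hp htv.2
    have huh : u ≤ 1/2 := D_half hq (by rcases htv with ⟨h', h''⟩; rw [← h']; exact h'')
    have hsu : s = u := by
      rcases ha with rfl | rfl <;> push_cast at e1 <;> linarith
    simp only [Prod.mk.injEq]
    exact ⟨hsu, htv.1⟩

lemma coeff_unique {l1 l2 : V2} (hind : LinearIndependent ℝ ![l1, l2])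
    {a b c d : ℝ} (h : a • l1 + b • l2 = c • l1 + d • l2) : a = c ∧ b = d := by
  have h' : (a • l1 + b • l2) - (c • l1 + d • l2) = 0 := sub_eq_zero.mpr h
  have h0 : (a - c) • l1 + (b - d) • l2 = 0 := by rw [← h']; module
  obtain ⟨h1, h2⟩ := LinearIndependent.pair_iff.mp hind (a - c) (b - d) h0
  exact ⟨sub_eq_zero.mp h1, sub_eq_zero.mp h2⟩

lemma orbitG_self (Λ : AddSubgroup V2) (x : V2) : x ∈ orbitG Λ x :=
  ⟨0, Λ.zero_mem, Or.inl (by simp)⟩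

lemma orbitG_symm {Λ : AddSubgroup V2} {x y : V2} (h : y ∈ orbitG Λ x) : x ∈ orbitG Λ y := by
  obtain ⟨l, hl, h | h⟩ := h
  · exact ⟨-l, Λ.neg_mem hl, Or.inl (by rw [h]; module)⟩
  · exact ⟨l, hl, Or.inr (by rw [h]; module)⟩

lemma orbitG_trans {Λ : AddSubgroup V2} {x y z : V2}
    (hzy : z ∈ orbitG Λ y) (hyx : y ∈ orbitG Λ x) : z ∈ orbitG Λ x := by
  obtain ⟨l, hl, h | h⟩ := hzy <;> obtain ⟨m, hm, h' | h'⟩ := hyx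
  · exact ⟨l + m, Λ.add_mem hl hm, Or.inl (by rw [h, h']; module)⟩
  · exact ⟨l + m, Λ.add_mem hl hm, Or.inr (by rw [h, h']; module)⟩
  · exact ⟨l - m, Λ.sub_mem hl hm, Or.inr (by rw [h, h']; module)⟩
  · exact ⟨l - m, Λ.sub_mem hl hm, Or.inl (by rw [h, h']; module)⟩

lemma orbitG_eq_iff {Λ : AddSubgroup V2} {x y : V2} :
    orbitG Λ y = orbitG Λ x ↔ y ∈ orbitG Λ x := by
  constructor
  · intro h
    rw [← h]
    exact orbitG_self Λ y
  · intro h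
    ext z
    exact ⟨fun hz => orbitG_trans hz h, fun hz => orbitG_trans hz (orbitG_symm h)⟩

lemma orbit_mem_iff (Λ : AddSubgroup V2) {l1 l2 : V2}
    (hind : LinearIndependent ℝ ![l1, l2])
    (hmem : ∀ x : V2, x ∈ Λ ↔ ∃ a b : ℤ, x = a • l1 + b • l2)
    (s t u v : ℝ) :
    ((2 * s) • l1 + t • l2) ∈ orbitG Λ ((2 * u) • l1 + v • l2) ↔ RelD (s, t) (u, v) := by
  constructor
  · rintro ⟨l, hl, h | h⟩
    · obtain ⟨a, b, rfl⟩ := (hmem l).mp hl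
      have key : (2*s) • l1 + t • l2 = (2*u + 2*(a:ℝ)) • l1 + (v + 2*(b:ℝ)) • l2 := by
        rw [h, ← Int.cast_smul_eq_zsmul ℝ a l1, ← Int.cast_smul_eq_zsmul ℝ b l2]
        module
      obtain ⟨h1, h2⟩ := coeff_unique hind key
      exact ⟨a, b, Or.inl ⟨by dsimp only; linarith, by dsimp only; linarith⟩⟩
    · obtain ⟨a, b, rfl⟩ := (hmem l).mp hl
      have key : (2*s) • l1 + t • l2 = (2*(a:ℝ) - 2*u) • l1 + (2*(b:ℝ) - v) • l2 := by
        rw [h, ← Int.cast_smul_eq_zsmul ℝ a l1, ← Int.cast_smul_eq_zsmul ℝ b l2]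
        module
      obtain ⟨h1, h2⟩ := coeff_unique hind key
      exact ⟨a, b, Or.inr ⟨by dsimp only; linarith, by dsimp only; linarith⟩⟩
  · rintro ⟨a, b, ⟨h1, h2⟩ | ⟨h1, h2⟩⟩ <;> dsimp only at h1 h2
    · refine ⟨a • l1 + b • l2, (hmem _).mpr ⟨a, b, rfl⟩, Or.inl ?_⟩
      rw [h1, h2, ← Int.cast_smul_eq_zsmul ℝ a l1, ← Int.cast_smul_eq_zsmul ℝ b l2]
      module
    · refine ⟨a • l1 + b • l2, (hmem _).mpr ⟨a, b, rfl⟩, Or.inr ?_⟩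
      rw [h1, h2, ← Int.cast_smul_eq_zsmul ℝ a l1, ← Int.cast_smul_eq_zsmul ℝ b l2]
      module

/-- Let `Λ` be a lattice in ℝ² with ℤ-basis `(λ₁, λ₂)`, and let
`T = {2sλ₁ + tλ₂ : (s,t) ∈ D}` be the union of the interior of the fundamental
parallelogram with corners `0, 2λ₁, λ₂, 2λ₁ + λ₂` and the "left half" of its boundary.
Then `T` contains exactly one point of each `Γ_Λ`-orbit, i.e. `π_Λ` restricted to `T` is
a bijection onto `ℝ²/Γ_Λ`. -/
theorem half_open_fundamental_domain_bijective
    (Λ : AddSubgroup V2) (l1 l2 : V2)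
    (hind : LinearIndependent ℝ ![l1, l2])
    (hmem : ∀ x : V2, x ∈ Λ ↔ ∃ a b : ℤ, x = a • l1 + b • l2)
    (x : V2) :
    ∃! y : V2, (∃ p ∈ Dset, y = (2 * p.1) • l1 + p.2 • l2) ∧
      orbitG Λ y = orbitG Λ x := by
  classical
  have hcard : Fintype.card (Fin 2) = Module.finrank ℝ V2 := by
    simp [finrank_euclideanSpace]
  let B : Module.Basis (Fin 2) ℝ V2 := basisOfLinearIndependentOfCardEqFinrank hind hcard
  have hB0 : B 0 = l1 := by
    simp [B, coe_basisOfLinearIndependentOfCardEqFinrank]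
  have hB1 : B 1 = l2 := by
    simp [B, coe_basisOfLinearIndependentOfCardEqFinrank]
  have hx : x = (2 * (B.repr x 0 / 2)) • l1 + (B.repr x 1) • l2 := by
    have h2 : 2 * (B.repr x 0 / 2) = B.repr x 0 := by ring
    rw [h2]
    conv_lhs => rw [← B.sum_repr x]
    rw [Fin.sum_univ_two, hB0, hB1]
  obtain ⟨p, hpD, hpRel⟩ := relD_exists (B.repr x 0 / 2) (B.repr x 1)
  refine ⟨(2 * p.1) • l1 + p.2 • l2, ⟨⟨p, hpD, rfl⟩, ?_⟩, ?_⟩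
  · rw [orbitG_eq_iff]
    have hmem' := (orbit_mem_iff Λ hind hmem p.1 p.2 (B.repr x 0 / 2) (B.repr x 1)).mpr hpRel
    rw [← hx] at hmem'
    exact hmem'
  · rintro y' ⟨⟨p', hp'D, rfl⟩, horb'⟩
    have h1 : RelD p' (B.repr x 0 / 2, B.repr x 1) := by
      have hy' := orbitG_eq_iff.mp horb'
      rw [hx] at hy'
      exact (orbit_mem_iff Λ hind hmem p'.1 p'.2 _ _).mp hy'
    have := relD_unique hp'D hpD (relD_trans hpRel h1)
    rw [this]
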